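/- Let e(n) = deg B_n(t) be the degree of the n-th Stern polynomial. There does not exist a positive integer n such that e(n) = e(n+1) = e(n+2) = e(n+3). -/

import Mathlib

open Polynomial

noncomputable def stern : ℕ → Polynomial ℤ
  | 0 => 0
  | 1 => 1
  | n + 2 =>
    if _h : n % 2 = 0 then
      X * stern (n / 2 + 1)
    else
      stern (n / 2 + 1) + stern (n / 2 + 2)
  decreasing_by all_goals omega

noncomputable def e (n : ℕ) : ℕ := (stern n).natDegree

lemma stern_two_mul (m : ℕ) (hm : 1 ≤ m) : stern (2 * m) = X * stern m := by
  obtain ⟨k, rfl⟩ : ∃ k, m = k + 1 := ⟨m - 1, by omega⟩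
  have : 2 * (k + 1) = 2 * k + 2 := by ring
  rw [this, stern]
  simp only [Nat.mul_mod_right, if_pos]
  norm_num

lemma stern_two_mul_add_one (m : ℕ) (hm : 1 ≤ m) :
    stern (2 * m + 1) = stern m + stern (m + 1) := by
  obtain ⟨k, rfl⟩ : ∃ k, m = k + 1 := ⟨m - 1, by omega⟩
  have : 2 * (k + 1) + 1 = (2 * k + 1) + 2 := by ring
  rw [this, stern]
  have h1 : (2 * k + 1) % 2 = 1 := by omega
  have h2 : (2 * k + 1) / 2 = k := by omega
  simp [h1, h2]

lemma stern_pos (n : ℕ) (hn : 1 ≤ n) :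
    (∀ i, 0 ≤ (stern n).coeff i) ∧ 0 < (stern n).coeff (stern n).natDegree := by
  induction n using Nat.strong_induction_on with
  | _ n ih =>
    match n, hn with
    | 1, _ =>
      refine ⟨fun i => ?_, ?_⟩
      · rw [show stern 1 = 1 by rw [stern], coeff_one]
        split <;> norm_num
      · simp [stern]
    | (n + 2), _ =>
      rcases Nat.even_or_odd (n + 2) with ⟨m, hm⟩ | ⟨m, hm⟩
      · have hm1 : 1 ≤ m := by omega
        have heq : n + 2 = 2 * m := by omega
        obtain ⟨hco, hlead⟩ := ih m (by omega) hm1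
        have hne : stern m ≠ 0 := fun h => by simp [h] at hlead
        rw [heq, stern_two_mul m hm1]
        constructor
        · intro i
          cases i with
          | zero => simp
          | succ j => rw [coeff_X_mul]; exact hco j
        · rw [natDegree_mul X_ne_zero hne, natDegree_X, add_comm 1,
            coeff_X_mul]
          exact hlead
      · have hm1 : 1 ≤ m := by omega
        have heq : n + 2 = 2 * m + 1 := by omega
        obtain ⟨hco1, hl1⟩ := ih m (by omega) hm1
        obtain ⟨hco2, hl2⟩ := ih (m + 1) (by omega) (by omega)
        rw [heq, stern_two_mul_add_one m hm1]
        set p := stern m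
        set q := stern (m + 1)
        have hcoadd : ∀ i, 0 ≤ (p + q).coeff i := fun i => by
          rw [coeff_add]; exact add_nonneg (hco1 i) (hco2 i)
        refine ⟨hcoadd, ?_⟩
        set d := max p.natDegree q.natDegree with hd
        have hpos : 0 < (p + q).coeff d := by
          rcases le_or_gt q.natDegree p.natDegree with h | h
          · have : d = p.natDegree := by omega
            rw [this, coeff_add]
            exact add_pos_of_pos_of_nonneg hl1 (hco2 _)
          · have : d = q.natDegree := by omega
            rw [this, coeff_add]
            exact add_pos_of_nonneg_of_pos (hco1 _) hl2
        have hnd : (p + q).natDegree = d := by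
          refine le_antisymm (natDegree_add_le p q) ?_
          exact le_natDegree_of_ne_zero (ne_of_gt hpos)
        rw [hnd]; exact hpos

lemma e_two_mul (m : ℕ) (hm : 1 ≤ m) : e (2 * m) = e m + 1 := by
  have hne : stern m ≠ 0 := fun h => by
    have := (stern_pos m hm).2; simp [h] at this
  rw [e, e, stern_two_mul m hm, natDegree_mul X_ne_zero hne, natDegree_X]
  omega

lemma e_two_mul_add_one (m : ℕ) (hm : 1 ≤ m) :
    e (2 * m + 1) = max (e m) (e (m + 1)) := by
  obtain ⟨hco1, hl1⟩ := stern_pos m hm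
  obtain ⟨hco2, hl2⟩ := stern_pos (m + 1) (by omega)
  rw [e, stern_two_mul_add_one m hm]
  set p := stern m
  set q := stern (m + 1)
  set d := max p.natDegree q.natDegree with hd
  have hpos : 0 < (p + q).coeff d := by
    rcases le_or_gt q.natDegree p.natDegree with h | h
    · have : d = p.natDegree := by omega
      rw [this, coeff_add]
      exact add_pos_of_pos_of_nonneg hl1 (hco2 _)
    · have : d = q.natDegree := by omega
      rw [this, coeff_add]
      exact add_pos_of_nonneg_of_pos (hco1 _) hl2
  exact le_antisymm (natDegree_add_le p q)
    (le_natDegree_of_ne_zero (ne_of_gt hpos))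

lemma no_three (m : ℕ) (hm : 1 ≤ m) :
    ¬(e (2 * m) = e (2 * m + 1) ∧ e (2 * m + 1) = e (2 * m + 2)) := by
  rintro ⟨h1, h2⟩
  have ha := e_two_mul m hm
  have hb := e_two_mul_add_one m hm
  have hc : e (2 * m + 2) = e (m + 1) + 1 := by
    have := e_two_mul (m + 1) (by omega)
    rw [show 2 * (m + 1) = 2 * m + 2 by ring] at this
    exact this
  rw [ha, hb] at h1
  rw [hb, hc] at h2
  omega

theorem stern_degree_no_four_equal (n : ℕ) (hn : 1 ≤ n) :
    ¬(e n = e (n + 1) ∧ e (n + 1) = e (n + 2) ∧ e (n + 2) = e (n + 3)) := by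
  rintro ⟨h1, h2, h3⟩
  rcases Nat.even_or_odd n with ⟨m, hm⟩ | ⟨m, hm⟩
  · have hm1 : 1 ≤ m := by omega
    exact no_three m hm1 (by rw [show 2*m = n by omega]; exact ⟨h1, h2⟩)
  · have hm1 : 1 ≤ m + 1 := by omega
    refine no_three (m + 1) hm1 ?_
    rw [show 2*(m+1) = n + 1 by omega]
    exact ⟨h2, h3⟩
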